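/- Let X_1, …, X_m (m ≥ 2) be i.i.d. real random variables with continuous cdf F satisfying F(a) = 0 (support bounded below by a), and let z > a satisfy F(z) > 0. Then the conditional expectation of the second-highest value given that the maximum is at most z satisfies E[ second-highest of X_1,…,X_m | max_i X_i ≤ z ] = z − m·∫_a^z ( F(t)/F(z) )^{m−1} dt + (m−1)·∫_a^z ( F(t)/F(z) )^m dt. -/

import Mathlib

open MeasureTheory ProbabilityTheory intervalIntegral

/-- **Conditional expectation of the second-highest of i.i.d. draws given that
the maximum is at most `z`.**  Let `X 0, …, X (m-1)` (`m ≥ 2`) be i.i.d. real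
random variables with continuous cdf `F` satisfying `F a = 0`, and let `z > a`
satisfy `F z > 0`.  Let `Y` be the maximum and `S` the second-highest value
(expressed as `min_i max_{j ≠ i} X_j`).  Then
`E[S | Y ≤ z] = z - m * ∫ t in a..z, (F t / F z)^(m-1)
  + (m-1) * ∫ t in a..z, (F t / F z)^m`. -/
theorem cond_exp_second_highest_of_iid
    (m : ℕ) (hm : 2 ≤ m)
    {Ω : Type*} [MeasurableSpace Ω] (μ : Measure Ω) [IsProbabilityMeasure μ]
    (X : Fin m → Ω → ℝ)
    (hXmeas : ∀ i, Measurable (X i))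
    (hXindep : iIndepFun X μ)
    (F : ℝ → ℝ) (hFcont : Continuous F)
    (hXcdf : ∀ i t, (μ {ω | X i ω ≤ t}).toReal = F t)
    (a : ℝ) (hFa : F a = 0)
    (z : ℝ) (haz : a < z) (hFz : 0 < F z)
    (Y S : Ω → ℝ)
    (hY : ∀ ω, Y ω = Finset.univ.sup'
      ⟨⟨0, by omega⟩, Finset.mem_univ _⟩ (fun i => X i ω))
    (hS : ∀ ω, S ω = Finset.univ.inf'
      ⟨⟨0, by omega⟩, Finset.mem_univ _⟩
      (fun i => (Finset.univ.erase i).sup'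
        (by
          rw [← Finset.card_pos, Finset.card_erase_of_mem (Finset.mem_univ i),
            Finset.card_univ, Fintype.card_fin]
          omega)
        (fun j => X j ω))) :
    ∫ ω, S ω ∂(μ[|{ω | Y ω ≤ z}]) =
      z - m * (∫ t in a..z, (F t / F z) ^ (m - 1))
        + (m - 1 : ℝ) * ∫ t in a..z, (F t / F z) ^ m := by
  obtain ⟨n, rfl⟩ : ∃ n, m = n + 2 := ⟨m - 2, by omega⟩
  have hprod : ∀ (B : Fin (n+2) → Set ℝ), (∀ i, MeasurableSet (B i)) →
      μ (⋂ i, X i ⁻¹' B i) = ∏ i, μ (X i ⁻¹' B i) :=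
    fun B hB => hXindep.meas_iInter (fun i => ⟨B i, hB i, rfl⟩)
  have hFnn : ∀ t, 0 ≤ F t := fun t => (hXcdf 0 t) ▸ ENNReal.toReal_nonneg
  have hμIic : ∀ i t, μ (X i ⁻¹' Set.Iic t) = ENNReal.ofReal (F t) := by
    intro i t
    rw [show X i ⁻¹' Set.Iic t = {ω | X i ω ≤ t} from rfl, ← hXcdf i t,
      ENNReal.ofReal_toReal (measure_ne_top μ _)]
  have hFmono : Monotone F := by
    intro s t hst
    rw [← hXcdf 0 s, ← hXcdf 0 t]
    exact ENNReal.toReal_mono (measure_ne_top _ _)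
      (measure_mono fun ω hω => le_trans hω hst)
  have hμIoc : ∀ (i : Fin (n+2)) s t, s ≤ t →
      μ (X i ⁻¹' Set.Ioc s t) = ENNReal.ofReal (F t - F s) := by
    intro i s t hst
    have hset : X i ⁻¹' Set.Ioc s t = X i ⁻¹' Set.Iic t \ X i ⁻¹' Set.Iic s := by
      ext ω
      simp only [Set.mem_preimage, Set.mem_Ioc, Set.mem_Iic, Set.mem_diff, not_le]
      tauto
    rw [hset, measure_diff (Set.preimage_mono (Set.Iic_subset_Iic.mpr hst))
      ((hXmeas i measurableSet_Iic).nullMeasurableSet) (measure_ne_top μ _),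
      hμIic, hμIic, ENNReal.ofReal_sub _ (hFnn s)]
  -- characterization of S ≤ t
  have hSle : ∀ (ω : Ω) (t : ℝ), S ω ≤ t ↔ ∃ i, ∀ j, j ≠ i → X j ω ≤ t := by
    intro ω t
    rw [hS ω]; refine (Finset.inf'_le_iff ..).trans ?_
    constructor
    · rintro ⟨i, -, hi⟩
      exact ⟨i, fun j hj => Finset.sup'_le_iff _ _ |>.mp hi j
        (Finset.mem_erase.mpr ⟨hj, Finset.mem_univ j⟩)⟩
    · rintro ⟨i, hi⟩
      exact ⟨i, Finset.mem_univ i, Finset.sup'_le _ _ fun j hj =>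
        hi j (Finset.mem_erase.mp hj).1⟩
  -- characterization of Y ≤ z
  have hYle : ∀ ω, Y ω ≤ z ↔ ∀ i, X i ω ≤ z := by
    intro ω
    rw [hY ω]; refine (Finset.sup'_le_iff ..).trans ?_
    exact ⟨fun h i => h i (Finset.mem_univ i), fun h i _ => h i⟩
  -- measurability of S
  have hSmeas : Measurable S := by
    have h1 : ∀ (i : Fin (n+2)) (hne : (Finset.univ.erase i).Nonempty),
        Measurable (fun ω => (Finset.univ.erase i).sup' hne (fun j => X j ω)) := by
      intro i hne
      have := Finset.measurable_sup' (f := fun j => X j) hne (fun j _ => hXmeas j)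
      convert this using 1
      funext ω
      rw [Finset.sup'_apply]
    have h2 := Finset.inf'_induction (s := (Finset.univ : Finset (Fin (n+2))))
      (H := ⟨⟨0, by omega⟩, Finset.mem_univ _⟩)
      (f := fun i => fun ω => (Finset.univ.erase i).sup'
        (by
          rw [← Finset.card_pos, Finset.card_erase_of_mem (Finset.mem_univ i),
            Finset.card_univ, Fintype.card_fin]
          omega)
        (fun j => X j ω))
      (p := Measurable)
      (fun f hf g hg => hf.inf hg) (by intro i _; exact h1 i _)
    have hfun : S = Finset.univ.inf'
      ⟨⟨0, by omega⟩, Finset.mem_univ _⟩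
      (fun i => fun ω => (Finset.univ.erase i).sup'
        (by
          rw [← Finset.card_pos, Finset.card_erase_of_mem (Finset.mem_univ i),
            Finset.card_univ, Fintype.card_fin]
          omega)
        (fun j => X j ω)) := by
      funext ω
      rw [hS ω]; exact (Finset.inf'_apply (C := fun _ : Ω => ℝ) _
        (fun i => fun ω => (Finset.univ.erase i).sup'
          (by
            rw [← Finset.card_pos, Finset.card_erase_of_mem (Finset.mem_univ i),
              Finset.card_univ, Fintype.card_fin]
            omega)
          (fun j => X j ω)) ω).symm
    rw [hfun]
    exact h2
  -- the conditioning event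
  set A := {ω | Y ω ≤ z} with hAdef
  have hA : A = ⋂ i, X i ⁻¹' Set.Iic z := by
    ext ω
    simp only [hAdef, Set.mem_setOf_eq, Set.mem_iInter, Set.mem_preimage, Set.mem_Iic]
    exact hYle ω
  have hAm : MeasurableSet A := by
    rw [hA]; exact MeasurableSet.iInter fun i => hXmeas i measurableSet_Iic
  have hμA : μ A = ENNReal.ofReal (F z) ^ (n+2) := by
    rw [hA, hprod _ fun _ => measurableSet_Iic]
    simp [hμIic, Finset.prod_const, Finset.card_univ]
  have hμA0 : μ A ≠ 0 := by
    rw [hμA]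
    exact pow_ne_zero _ (ENNReal.ofReal_pos.mpr hFz).ne'
  have hμAreal : (μ A).toReal = F z ^ (n+2) := by
    rw [hμA, ENNReal.toReal_pow, ENNReal.toReal_ofReal (hFnn z)]
  haveI hνprob : IsProbabilityMeasure (μ[|A]) := cond_isProbabilityMeasure hμA0
  -- the conditional cdf of S
  have hcdf : ∀ t, t ≤ z → (μ[|A] {ω | S ω ≤ t}).toReal =
      (F z ^ (n+2))⁻¹ * (F t ^ (n+2) + (n+2) * ((F z - F t) * F t ^ (n+1))) := by
    intro t ht
    have hD0 : μ (⋂ j, X j ⁻¹' Set.Iic t) = ENNReal.ofReal (F t) ^ (n+2) := by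
      rw [hprod _ fun _ => measurableSet_Iic]
      simp [hμIic, Finset.prod_const, Finset.card_univ]
    set D : Fin (n+2) → Set Ω :=
      fun i => ⋂ j, X j ⁻¹' (if j = i then Set.Ioc t z else Set.Iic t) with hDdef
    have hBm : ∀ (i j : Fin (n+2)),
        MeasurableSet (if j = i then Set.Ioc t z else Set.Iic t) := by
      intro i j
      split
      · exact measurableSet_Ioc
      · exact measurableSet_Iic
    have hDm : ∀ i, MeasurableSet (D i) :=
      fun i => MeasurableSet.iInter fun j => hXmeas j (hBm i j)
    have hDval : ∀ i, μ (D i) =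
        ENNReal.ofReal (F z - F t) * ENNReal.ofReal (F t) ^ (n+1) := by
      intro i
      rw [hDdef]
      rw [hprod _ (hBm i), ← Finset.mul_prod_erase Finset.univ _ (Finset.mem_univ i)]
      rw [if_pos rfl, hμIoc i t z ht]
      congr 1
      rw [Finset.prod_congr rfl (fun j hj => by
          rw [if_neg (Finset.mem_erase.mp hj).1, hμIic]),
        Finset.prod_const, Finset.card_erase_of_mem (Finset.mem_univ i),
        Finset.card_univ, Fintype.card_fin]
      norm_num
    have hdecomp : A ∩ {ω | S ω ≤ t} = (⋂ j, X j ⁻¹' Set.Iic t) ∪ ⋃ i, D i := by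
      ext ω
      constructor
      · rintro ⟨hωA, hωS⟩
        have hz' : ∀ i, X i ω ≤ z := (hYle ω).mp hωA
        obtain ⟨i, hi⟩ := (hSle ω t).mp hωS
        by_cases hXi : X i ω ≤ t
        · refine Or.inl (Set.mem_iInter.mpr fun j => ?_)
          by_cases hj : j = i
          · subst hj; exact hXi
          · exact hi j hj
        · refine Or.inr (Set.mem_iUnion.mpr ⟨i, Set.mem_iInter.mpr fun j => ?_⟩)
          by_cases hj : j = i
          · subst hj
            simp only [if_pos rfl, Set.mem_preimage, Set.mem_Ioc]
            exact ⟨not_le.mp hXi, hz' j⟩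
          · simp only [if_neg hj, Set.mem_preimage, Set.mem_Iic]
            exact hi j hj
      · rintro (h | h)
        · have hh : ∀ j, X j ω ≤ t := fun j => Set.mem_iInter.mp h j
          exact ⟨(hYle ω).mpr fun i => le_trans (hh i) ht,
            (hSle ω t).mpr ⟨0, fun j _ => hh j⟩⟩
        · obtain ⟨i, hi⟩ := Set.mem_iUnion.mp h
          have hi' := Set.mem_iInter.mp hi
          have hXi : X i ω ∈ Set.Ioc t z := by simpa using hi' i
          have hj : ∀ j, j ≠ i → X j ω ≤ t := fun j hj => by
            have := hi' j
            simpa [if_neg hj] using this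
          refine ⟨(hYle ω).mpr fun j => ?_, (hSle ω t).mpr ⟨i, hj⟩⟩
          by_cases h' : j = i
          · subst h'; exact hXi.2
          · exact le_trans (hj j h') ht
    have hdisj1 : Disjoint (⋂ j, X j ⁻¹' Set.Iic t) (⋃ i, D i) := by
      rw [Set.disjoint_left]
      rintro ω hω hω'
      obtain ⟨i, hi⟩ := Set.mem_iUnion.mp hω'
      have h1 : X i ω ∈ Set.Ioc t z := by simpa using Set.mem_iInter.mp hi i
      have h2 : X i ω ≤ t := by simpa using Set.mem_iInter.mp hω i
      exact absurd h2 (not_le.mpr h1.1)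
    have hdisj2 : Pairwise (Function.onFun Disjoint D) := by
      intro i k hik
      rw [Function.onFun, Set.disjoint_left]
      intro ω hωi hωk
      have h1 : X k ω ∈ Set.Ioc t z := by simpa using Set.mem_iInter.mp hωk k
      have h2 : X k ω ≤ t := by
        have := Set.mem_iInter.mp hωi k
        simpa [if_neg hik.symm] using this
      exact absurd h2 (not_le.mpr h1.1)
    have hμE : μ (A ∩ {ω | S ω ≤ t}) =
        ENNReal.ofReal (F t) ^ (n+2)
          + (n+2) * (ENNReal.ofReal (F z - F t) * ENNReal.ofReal (F t) ^ (n+1)) := by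
      rw [hdecomp, measure_union hdisj1 (MeasurableSet.iUnion hDm), hD0,
        measure_iUnion hdisj2 hDm, tsum_fintype]
      simp only [hDval, Finset.sum_const, Finset.card_univ, Fintype.card_fin,
        nsmul_eq_mul, Nat.cast_ofNat, Nat.cast_add]
    have h1 : 0 ≤ F z - F t := sub_nonneg.mpr (hFmono ht)
    have hne1 : ENNReal.ofReal (F t) ^ (n+2) ≠ ⊤ :=
      ENNReal.pow_ne_top ENNReal.ofReal_ne_top
    have hne2 : ((n : ENNReal) + 2) * (ENNReal.ofReal (F z - F t)
        * ENNReal.ofReal (F t) ^ (n+1)) ≠ ⊤ :=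
      ENNReal.mul_ne_top (ENNReal.add_ne_top.mpr ⟨ENNReal.natCast_ne_top n, by norm_num⟩)
        (ENNReal.mul_ne_top ENNReal.ofReal_ne_top (ENNReal.pow_ne_top ENNReal.ofReal_ne_top))
    rw [cond_apply hAm, ENNReal.toReal_mul, ENNReal.toReal_inv, hμAreal, hμE,
      ENNReal.toReal_add hne1 hne2]
    rw [ENNReal.toReal_mul, ENNReal.toReal_mul, ENNReal.toReal_pow, ENNReal.toReal_pow,
      ENNReal.toReal_ofReal (hFnn t), ENNReal.toReal_ofReal h1,
      ENNReal.toReal_add (ENNReal.natCast_ne_top n) (by norm_num),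
      ENNReal.toReal_natCast, ENNReal.toReal_ofNat]
  -- a.e. upper bound
  have hSz : ∀ ω ∈ A, S ω ≤ z :=
    fun ω hω => (hSle ω z).mpr ⟨0, fun j _ => (hYle ω).mp hω j⟩
  have hub : ∀ᵐ ω ∂(μ[|A]), S ω ≤ z := by
    have hAc : μ[|A] Aᶜ = 0 := by
      rw [cond_apply hAm]
      simp
    rw [ae_iff]
    exact measure_mono_null (fun ω hω hA' => hω (hSz ω hA')) hAc
  -- a.e. lower bound
  have hSz0 : μ[|A] {ω | S ω ≤ a} = 0 := by
    have hsub : {ω | S ω ≤ a} ⊆ ⋃ j, {ω | X j ω ≤ a} := by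
      intro ω hω
      obtain ⟨i, hi⟩ := (hSle ω a).mp hω
      obtain ⟨j, hj⟩ : ∃ j : Fin (n+2), j ≠ i := by
        rcases eq_or_ne i 0 with h | h
        · exact ⟨1, by rw [h]; simp [Fin.ext_iff]⟩
        · exact ⟨0, fun hc => h hc.symm⟩
      exact Set.mem_iUnion.mpr ⟨j, hi j hj⟩
    have h0 : μ {ω | S ω ≤ a} = 0 := by
      refine measure_mono_null hsub (measure_iUnion_null fun j => ?_)
      have h := hXcdf j a
      rw [hFa] at h
      exact ((ENNReal.toReal_eq_zero_iff _).mp h).resolve_right (measure_ne_top μ _)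
    rw [cond_apply hAm, measure_inter_null_of_null_right _ h0, mul_zero]
  have hlb : ∀ᵐ ω ∂(μ[|A]), a < S ω := by
    rw [ae_iff]
    simpa [not_lt] using hSz0
  -- integrability
  have hint : Integrable (fun ω => S ω - a) (μ[|A]) := by
    refine Integrable.mono' (integrable_const (z - a))
      ((hSmeas.sub measurable_const).aestronglyMeasurable) ?_
    filter_upwards [hub, hlb] with ω h1 h2
    rw [Real.norm_eq_abs, abs_le]
    constructor <;> linarith
  have hSint : Integrable S (μ[|A]) := by
    have hfe : S = (fun ω => S ω - a) + fun _ => a := by funext ω; simp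
    rw [hfe]
    exact hint.add (integrable_const a)
  -- layer cake
  have hlayer := hint.integral_eq_integral_meas_lt
    (by filter_upwards [hlb] with ω h; simp only [Pi.zero_apply]; linarith)
  have hLHS : ∫ ω, (S ω - a) ∂(μ[|A]) = (∫ ω, S ω ∂(μ[|A])) - a := by
    rw [integral_sub hSint (integrable_const a), MeasureTheory.integral_const]
    simp
  have hset : ∀ t : ℝ, {ω | t < S ω - a} = {ω | a + t < S ω} := by
    intro t; ext ω
    simp only [Set.mem_setOf_eq]
    constructor <;> intro <;> linarith
  have hnull : ∀ s, z < s → μ[|A] {ω | s < S ω} = 0 := by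
    intro s hs
    refine measure_mono_null (fun ω hω => ?_) (ae_iff.mp hub)
    simp only [Set.mem_setOf_eq, not_le] at *
    linarith
  have hcompl : ∀ s, s ≤ z → (μ[|A] {ω | s < S ω}).toReal =
      1 - (F z ^ (n+2))⁻¹ * (F s ^ (n+2) + (n+2) * ((F z - F s) * F s ^ (n+1))) := by
    intro s hs
    have hmeas : MeasurableSet {ω | S ω ≤ s} := hSmeas measurableSet_Iic
    have hc : {ω | s < S ω} = {ω | S ω ≤ s}ᶜ := by
      ext ω; simp [not_le]
    rw [hc, prob_compl_eq_one_sub hmeas,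
      ENNReal.toReal_sub_of_le prob_le_one ENNReal.one_ne_top,
      ENNReal.toReal_one, hcdf s hs]
  -- restrict the layer-cake integral to (0, z-a]
  have hg_ind : Set.EqOn (fun t => (μ[|A] {ω | a + t < S ω}).toReal)
      (Set.indicator (Set.Ioc 0 (z - a))
        (fun t => (μ[|A] {ω | a + t < S ω}).toReal)) (Set.Ioi 0) := by
    intro t ht
    by_cases h : t ∈ Set.Ioc 0 (z - a)
    · rw [Set.indicator_of_mem h]
    · rw [Set.indicator_of_notMem h]
      have hz' : z < a + t := by
        simp only [Set.mem_Ioc, Set.mem_Ioi, not_and, not_le] at h ht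
        linarith [h ht]
      simp only
      rw [hnull _ hz']
      simp
  have hRHS1 : ∫ t in Set.Ioi (0:ℝ), (μ[|A] {ω | a + t < S ω}).toReal =
      ∫ t in Set.Ioc 0 (z - a), (μ[|A] {ω | a + t < S ω}).toReal := by
    rw [setIntegral_congr_fun measurableSet_Ioi hg_ind,
      setIntegral_indicator measurableSet_Ioc,
      Set.inter_eq_self_of_subset_right Set.Ioc_subset_Ioi_self]
  have hH : Set.EqOn (fun t => (μ[|A] {ω | a + t < S ω}).toReal)
      (fun t => (fun s => 1 - (F z ^ (n+2))⁻¹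
        * (F s ^ (n+2) + (n+2) * ((F z - F s) * F s ^ (n+1)))) (a + t))
      (Set.Ioc (0:ℝ) (z - a)) := by
    intro t ht
    simp only [Set.mem_Ioc] at ht
    exact hcompl (a + t) (by linarith [ht.2])
  have hRHS2 : ∫ t in Set.Ioc (0:ℝ) (z - a), (μ[|A] {ω | a + t < S ω}).toReal =
      ∫ s in a..z, (1 - (F z ^ (n+2))⁻¹
        * (F s ^ (n+2) + (n+2) * ((F z - F s) * F s ^ (n+1)))) := by
    rw [setIntegral_congr_fun measurableSet_Ioc hH,
      ← intervalIntegral.integral_of_le (by linarith : (0:ℝ) ≤ z - a),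
      intervalIntegral.integral_comp_add_left
        (fun s => 1 - (F z ^ (n+2))⁻¹
          * (F s ^ (n+2) + (n+2) * ((F z - F s) * F s ^ (n+1)))) a]
    norm_num
  -- pointwise algebraic identity
  have hzne : F z ≠ 0 := ne_of_gt hFz
  have hptwise : ∀ s, (1 - (F z ^ (n+2))⁻¹
        * (F s ^ (n+2) + (n+2) * ((F z - F s) * F s ^ (n+1))))
      = 1 - (((n:ℝ)+2) * (F s / F z)^(n+1) - ((n:ℝ)+1) * (F s / F z)^(n+2)) := by
    intro s
    rw [div_pow, div_pow]
    field_simp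
    ring
  have hInt1 : IntervalIntegrable (fun s => (F s / F z)^(n+1)) volume a z :=
    ((hFcont.div_const _).pow _).intervalIntegrable a z
  have hInt2 : IntervalIntegrable (fun s => (F s / F z)^(n+2)) volume a z :=
    ((hFcont.div_const _).pow _).intervalIntegrable a z
  have hsplit : ∫ s in a..z, (1 - (F z ^ (n+2))⁻¹
        * (F s ^ (n+2) + (n+2) * ((F z - F s) * F s ^ (n+1))))
      = (z - a) - (((n:ℝ)+2) * ∫ s in a..z, (F s / F z)^(n+1))
          + ((n:ℝ)+1) * ∫ s in a..z, (F s / F z)^(n+2) := by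
    simp_rw [hptwise]
    rw [intervalIntegral.integral_sub intervalIntegrable_const
        ((hInt1.const_mul _).sub (hInt2.const_mul _)),
      intervalIntegral.integral_sub (hInt1.const_mul _) (hInt2.const_mul _),
      intervalIntegral.integral_const_mul, intervalIntegral.integral_const_mul,
      intervalIntegral.integral_const]
    simp only [smul_eq_mul, mul_one]
    ring
  -- assemble
  have hfinal : ∫ ω, S ω ∂(μ[|A]) = a + ((z - a)
      - (((n:ℝ)+2) * ∫ s in a..z, (F s / F z)^(n+1))
      + ((n:ℝ)+1) * ∫ s in a..z, (F s / F z)^(n+2)) := by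
    have h1 := hlayer
    simp_rw [hset, measureReal_def] at h1
    rw [hLHS, hRHS1, hRHS2, hsplit] at h1
    linarith
  rw [hfinal]
  rw [show n + 2 - 1 = n + 1 from rfl]
  push_cast
  ring
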